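/- Let $j^* \ge 2$ and $k^* = j^* + 1 \le 2n$. Define $p_j = j/2^j$ for $j < j^*$, $p_{j^*} = (j^*-1)/2^{j^*-1}$, $p_{k^*} = 1/2^{k^*-3}$, and $p_j = 0$ for $j > k^*$; define $q_j = (3j-1)/2^{j+2}$ for $j \le j^*-2$, $q_{j^*-1} = 4(j^*-1)/2^{j^*+1}$, $q_{j^*} = 4/2^{j^*+1}$, and $q_j = 0$ for $j > j^*$. Then for every $i$ with $1 \le i \le 2n$, $2\sum_{j=1}^i q_j \ge \sum_{j=1}^i p_j$. -/

import Mathlib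

/-- Prefix-sum domination in the case `k* = j* + 1` of the rank-2 single-sample
prophet inequality analysis. -/
theorem prefix_domination_case_kstar_eq (n js ks : ℕ) (p q : ℕ → ℝ)
    (hjs : 2 ≤ js) (hks : ks = js + 1) (h2n : ks ≤ 2 * n)
    (hp1 : ∀ j, 1 ≤ j → j < js → p j = (j : ℝ) / 2 ^ j)
    (hp2 : p js = ((js : ℝ) - 1) / (2 : ℝ) ^ ((js : ℤ) - 1))
    (hp3 : p ks = 1 / (2 : ℝ) ^ ((ks : ℤ) - 3))
    (hp4 : ∀ j, ks < j → p j = 0)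
    (hq1 : ∀ j, 1 ≤ j → j ≤ js - 2 → q j = (3 * (j : ℝ) - 1) / 2 ^ (j + 2))
    (hq2 : q (js - 1) = 4 * ((js : ℝ) - 1) / 2 ^ (js + 1))
    (hq3 : q js = 4 / 2 ^ (js + 1))
    (hq4 : ∀ j, js < j → q j = 0) :
    ∀ i, 1 ≤ i → i ≤ 2 * n →
      ∑ j ∈ Finset.Icc 1 i, p j ≤ 2 * ∑ j ∈ Finset.Icc 1 i, q j := by
  obtain ⟨t, rfl⟩ : ∃ t, js = t + 2 := ⟨js - 2, by omega⟩
  subst hks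
  -- clean versions of the hypotheses
  have hp2' : p (t + 2) = ((t : ℝ) + 1) / 2 ^ (t + 1) := by
    have h1 : ((t + 2 : ℕ) : ℤ) - 1 = ((t + 1 : ℕ) : ℤ) := by push_cast; ring
    rw [hp2, h1, zpow_natCast]
    push_cast; ring
  have hp3' : p (t + 2 + 1) = 1 / 2 ^ t := by
    have h1 : ((t + 2 + 1 : ℕ) : ℤ) - 3 = ((t : ℕ) : ℤ) := by push_cast; ring
    rw [hp3, h1, zpow_natCast]
  have hq2' : q (t + 1) = 4 * ((t : ℝ) + 1) / 2 ^ (t + 3) := by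
    have h1 : t + 2 - 1 = t + 1 := by omega
    rw [h1] at hq2
    rw [hq2]; push_cast; ring
  have two_ne : (2 : ℝ) ≠ 0 := by norm_num
  -- closed form of the partial sums of 2*q - p up to t
  have key : ∀ m, m ≤ t →
      ∑ j ∈ Finset.Icc 1 m, (2 * q j - p j) = 1 / 2 - ((m : ℝ) + 1) / 2 ^ (m + 1) := by
    intro m
    induction m with
    | zero => intro _; simp
    | succ m ih =>
      intro hm
      rw [Finset.sum_Icc_succ_top (by omega), ih (by omega),
        hq1 (m + 1) (by omega) (by omega), hp1 (m + 1) (by omega) (by omega)]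
      push_cast
      have h1 : (2 : ℝ) ^ (m + 1) ≠ 0 := by positivity
      have h2 : (2 : ℝ) ^ (m + 1 + 2) ≠ 0 := by positivity
      have h3 : (2 : ℝ) ^ (m + 1 + 1) ≠ 0 := by positivity
      field_simp
      ring
  have S1 : ∑ j ∈ Finset.Icc 1 (t + 1), (2 * q j - p j) = 1 / 2 := by
    rw [Finset.sum_Icc_succ_top (by omega), key t le_rfl, hq2',
      hp1 (t + 1) (by omega) (by omega)]
    push_cast
    have h1 : (2 : ℝ) ^ (t + 1) ≠ 0 := by positivity
    have h3 : (2 : ℝ) ^ (t + 3) ≠ 0 := by positivity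
    field_simp
    ring
  have S2 : ∑ j ∈ Finset.Icc 1 (t + 2), (2 * q j - p j)
      = 1 / 2 + (1 - (t : ℝ)) / 2 ^ (t + 1) := by
    rw [Finset.sum_Icc_succ_top (by omega), S1, hq3, hp2']
    push_cast
    have h1 : (2 : ℝ) ^ (t + 1) ≠ 0 := by positivity
    have h3 : (2 : ℝ) ^ (t + 2 + 1) ≠ 0 := by positivity
    field_simp
    ring
  have S3 : ∑ j ∈ Finset.Icc 1 (t + 3), (2 * q j - p j)
      = 1 / 2 - ((t : ℝ) + 1) / 2 ^ (t + 1) := by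
    have h0 : t + 3 = (t + 2) + 1 := by omega
    rw [h0, Finset.sum_Icc_succ_top (by omega), S2, hq4 (t + 2 + 1) (by omega), hp3']
    have h1 : (2 : ℝ) ^ (t + 1) ≠ 0 := by positivity
    have h3 : (2 : ℝ) ^ t ≠ 0 := by positivity
    field_simp
    ring
  have pow_bound : ∀ m : ℕ, ((m : ℝ) + 1) ≤ 2 ^ m := fun m => by
    exact_mod_cast Nat.lt_two_pow_self (n := m)
  have pow_pos' : ∀ m : ℕ, (0 : ℝ) < 2 ^ m := fun m => by positivity
  intro i hi1 hi2
  rw [← sub_nonneg]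
  have hsum : 2 * ∑ j ∈ Finset.Icc 1 i, q j - ∑ j ∈ Finset.Icc 1 i, p j
      = ∑ j ∈ Finset.Icc 1 i, (2 * q j - p j) := by
    rw [Finset.sum_sub_distrib, Finset.mul_sum]
  rw [hsum]
  rcases le_or_gt i t with h | h
  · rw [key i h, sub_nonneg]
    rw [div_le_div_iff₀ (pow_pos' (i + 1)) (by norm_num)]
    have := pow_bound i
    have h2 : (2 : ℝ) ^ (i + 1) = 2 * 2 ^ i := by ring
    nlinarith [pow_pos' i]
  rcases eq_or_lt_of_le (Nat.succ_le_of_lt h) with h1 | h1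
  · rw [← h1, S1]; norm_num
  rcases eq_or_lt_of_le (Nat.succ_le_of_lt h1) with h2 | h2
  · rw [← h2, S2]
    have hb := pow_bound t
    have hp := pow_pos' (t + 1)
    have h3 : (2 : ℝ) ^ (t + 1) = 2 * 2 ^ t := by ring
    have : -(1 / 2 : ℝ) ≤ (1 - (t : ℝ)) / 2 ^ (t + 1) := by
      rw [le_div_iff₀ hp, h3]
      nlinarith [pow_pos' t]
    linarith
  · -- i ≥ t + 3 : the sum equals the sum up to t + 3
    have hsub : Finset.Icc 1 (t + 3) ⊆ Finset.Icc 1 i := by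
      apply Finset.Icc_subset_Icc le_rfl
      omega
    have heq : ∑ j ∈ Finset.Icc 1 i, (2 * q j - p j)
        = ∑ j ∈ Finset.Icc 1 (t + 3), (2 * q j - p j) := by
      rw [← Finset.sum_subset hsub]
      intro x hx hx'
      simp only [Finset.mem_Icc] at hx hx'
      have hxgt : t + 3 < x := by omega
      rw [hq4 x (by omega), hp4 x (by omega)]
      ring
    rw [heq, S3, sub_nonneg]
    rw [div_le_div_iff₀ (pow_pos' (t + 1)) (by norm_num)]
    have hb := pow_bound t
    have h3 : (2 : ℝ) ^ (t + 1) = 2 * 2 ^ t := by ring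
    nlinarith [pow_pos' t]
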